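/- Let N ≥ 3 be an integer, t a real number, g ≥ 0, and V : {1,…,N} → ℝ. Let E_1 ≤ … ≤ E_N be the eigenvalues, in nondecreasing order, of the linear Hamiltonian H_0^P with periodic boundary conditions. Suppose ψ ∈ ℂ^N with ∑_{i=1}^N |ψ_i|² = 1 satisfies t(ψ_{i+1} + ψ_{i−1}) + V_i ψ_i + g|ψ_i|²ψ_i = Eψ_i for all i = 1,…,N with the Dirichlet convention ψ_0 = ψ_{N+1} = 0, for some real E. Then dist(E, ⋃_{n=1}^N [E_n, E_n + g]) ≤ |t|·√(|ψ_1|² + |ψ_N|²). In other words, the eigenenergy of a Dirichlet solution can lie in the forbidden region only within distance |t|·√(|ψ_1|² + |ψ_N|²) of its complement. -/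

import Mathlib

open Matrix Filter

noncomputable section

/-- Successor site with periodic boundary conditions (index mod `N`). -/
def pSucc {N : ℕ} (i : Fin N) : Fin N :=
  ⟨(i.1 + 1) % N, Nat.mod_lt _ (Nat.lt_of_le_of_lt (Nat.zero_le _) i.isLt)⟩

/-- Predecessor site with periodic boundary conditions (index mod `N`). -/
def pPred {N : ℕ} (i : Fin N) : Fin N :=
  ⟨(i.1 + (N - 1)) % N, Nat.mod_lt _ (Nat.lt_of_le_of_lt (Nat.zero_le _) i.isLt)⟩

/-- The linear Hamiltonian `H_0^P` with periodic boundary conditions: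
`(H ψ)_i = t (ψ_{i+1} + ψ_{i-1}) + V_i ψ_i`, indices mod `N`. -/
def periodicH (N : ℕ) (t : ℝ) (V : Fin N → ℝ) : Matrix (Fin N) (Fin N) ℂ :=
  Matrix.of fun i j =>
    (if j = pSucc i then (t : ℂ) else 0) + (if j = pPred i then (t : ℂ) else 0) +
      (if j = i then (V i : ℂ) else 0)

/-- The linear Hamiltonian `H_0^D` with Dirichlet boundary conditions
(convention `ψ_0 = ψ_{N+1} = 0`). -/
def dirichletH (N : ℕ) (t : ℝ) (V : Fin N → ℝ) : Matrix (Fin N) (Fin N) ℂ :=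
  Matrix.of fun i j =>
    (if i.1 + 1 = j.1 then (t : ℂ) else 0) + (if j.1 + 1 = i.1 then (t : ℂ) else 0) +
      (if j = i then (V i : ℂ) else 0)

/-- Sum of the neighboring values `ψ_{i+1} + ψ_{i-1}` with the Dirichlet
convention `ψ_0 = ψ_{N+1} = 0`. -/
def dNbr {N : ℕ} (ψ : Fin N → ℂ) (i : Fin N) : ℂ :=
  (if h : i.1 + 1 < N then ψ ⟨i.1 + 1, h⟩ else 0) +
    (if 0 < i.1 then ψ ⟨i.1 - 1, Nat.lt_of_le_of_lt (Nat.sub_le _ _) i.isLt⟩ else 0)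

/-- The stationary nonlinear Schrödinger equation with periodic boundary conditions:
`t (ψ_{i+1} + ψ_{i-1}) + V_i ψ_i + g |ψ_i|² ψ_i = E ψ_i`, indices mod `N`. -/
def PeriodicNLS (N : ℕ) (t g : ℝ) (V : Fin N → ℝ) (ψ : Fin N → ℂ) (E : ℝ) : Prop :=
  ∀ i : Fin N,
    (t : ℂ) * (ψ (pSucc i) + ψ (pPred i)) + (V i : ℂ) * ψ i +
        (g : ℂ) * ((‖ψ i‖ : ℂ)) ^ 2 * ψ i = (E : ℂ) * ψ i

/-- The stationary nonlinear Schrödinger equation with Dirichlet boundary conditions: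
`t (ψ_{i+1} + ψ_{i-1}) + V_i ψ_i + g |ψ_i|² ψ_i = E ψ_i`, with `ψ_0 = ψ_{N+1} = 0`. -/
def DirichletNLS (N : ℕ) (t g : ℝ) (V : Fin N → ℝ) (ψ : Fin N → ℂ) (E : ℝ) : Prop :=
  ∀ i : Fin N,
    (t : ℂ) * dNbr ψ i + (V i : ℂ) * ψ i +
        (g : ℂ) * ((‖ψ i‖ : ℂ)) ^ 2 * ψ i = (E : ℂ) * ψ i

/-- Normalization `∑ i |ψ_i|² = 1`. -/
def Normalized {N : ℕ} (ψ : Fin N → ℂ) : Prop :=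
  ∑ i, ‖ψ i‖ ^ 2 = 1

/-- `e` lists the eigenvalues of the Hermitian matrix `A` in nondecreasing order,
counted with multiplicity. -/
def IsSortedEigenvalues {N : ℕ} {A : Matrix (Fin N) (Fin N) ℂ} (hA : A.IsHermitian)
    (e : Fin N → ℝ) : Prop :=
  Monotone e ∧ ∃ σ : Equiv.Perm (Fin N), ∀ i, e i = hA.eigenvalues (σ i)


lemma toEuclideanLin_eigen {N : ℕ} {A : Matrix (Fin N) (Fin N) ℂ} (hA : A.IsHermitian)
    (j : Fin N) :
    Matrix.toEuclideanLin A (hA.eigenvectorBasis j)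
      = (hA.eigenvalues j : ℂ) • hA.eigenvectorBasis j := by
  apply (WithLp.equiv 2 _).injective
  have h := hA.mulVec_eigenvectorBasis j
  funext i
  have := congrFun h i
  simpa [Matrix.toEuclideanLin_apply, Complex.real_smul] using this

lemma repr_toEuclideanLin {N : ℕ} {A : Matrix (Fin N) (Fin N) ℂ} (hA : A.IsHermitian)
    (v : EuclideanSpace ℂ (Fin N)) (j : Fin N) :
    hA.eigenvectorBasis.repr (Matrix.toEuclideanLin A v) j
      = (hA.eigenvalues j : ℂ) * hA.eigenvectorBasis.repr v j := by
  rw [OrthonormalBasis.repr_apply_apply, OrthonormalBasis.repr_apply_apply]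
  have hsym := Matrix.isHermitian_iff_isSymmetric.1 hA
  rw [← hsym (hA.eigenvectorBasis j) v, toEuclideanLin_eigen hA j, inner_smul_left]
  simp [Complex.conj_ofReal]

lemma normsq_eq_sum {N : ℕ} (b : OrthonormalBasis (Fin N) ℂ (EuclideanSpace ℂ (Fin N)))
    (v : EuclideanSpace ℂ (Fin N)) :
    ‖v‖ ^ 2 = ∑ j, ‖b.repr v j‖ ^ 2 := by
  rw [← b.repr.norm_map v, EuclideanSpace.norm_eq, Real.sq_sqrt (by positivity)]

lemma inner_eq_sum {N : ℕ} (b : OrthonormalBasis (Fin N) ℂ (EuclideanSpace ℂ (Fin N)))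
    (x y : EuclideanSpace ℂ (Fin N)) :
    (inner ℂ x y : ℂ) = ∑ j, (starRingEnd ℂ) (b.repr x j) * b.repr y j := by
  rw [← b.repr.inner_map_map x y, PiLp.inner_apply]
  simp only [RCLike.inner_apply']

lemma exists_eigenvalue_close {N : ℕ} {A : Matrix (Fin N) (Fin N) ℂ} (hA : A.IsHermitian)
    (hN : 0 < N) (v : EuclideanSpace ℂ (Fin N)) (hv : ‖v‖ = 1) (E : ℝ) :
    ∃ k, (hA.eigenvalues k - E) ^ 2 ≤ ‖Matrix.toEuclideanLin A v - (E : ℂ) • v‖ ^ 2 := by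
  obtain ⟨k, -, hk⟩ := Finset.exists_min_image Finset.univ
    (fun j => (hA.eigenvalues j - E) ^ 2) ⟨⟨0, hN⟩, Finset.mem_univ _⟩
  refine ⟨k, ?_⟩
  set b := hA.eigenvectorBasis with hb
  have hrepr : ∀ j, b.repr (Matrix.toEuclideanLin A v - (E : ℂ) • v) j
      = ((hA.eigenvalues j - E : ℝ) : ℂ) * b.repr v j := by
    intro j
    rw [map_sub, _root_.map_smul]
    simp only [PiLp.sub_apply, PiLp.smul_apply, repr_toEuclideanLin hA v j]
    rw [smul_eq_mul, repr_toEuclideanLin hA v j]; push_cast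
    ring
  have h1 : ‖Matrix.toEuclideanLin A v - (E : ℂ) • v‖ ^ 2
      = ∑ j, (hA.eigenvalues j - E) ^ 2 * ‖b.repr v j‖ ^ 2 := by
    rw [normsq_eq_sum b]
    refine Finset.sum_congr rfl fun j _ => ?_
    rw [hrepr j, norm_mul]
    rw [Complex.norm_real, Real.norm_eq_abs]
    rw [mul_pow, sq_abs]
  have h2 : ∑ j, ‖b.repr v j‖ ^ 2 = 1 := by
    have := normsq_eq_sum b v
    rw [hv] at this
    simpa using this.symm
  calc (hA.eigenvalues k - E) ^ 2
      = ∑ j, (hA.eigenvalues k - E) ^ 2 * ‖b.repr v j‖ ^ 2 := by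
        rw [← Finset.mul_sum, h2, mul_one]
    _ ≤ ∑ j, (hA.eigenvalues j - E) ^ 2 * ‖b.repr v j‖ ^ 2 :=
        Finset.sum_le_sum fun j _ =>
          mul_le_mul_of_nonneg_right (hk j (Finset.mem_univ j)) (by positivity)
    _ = _ := h1.symm

lemma eigenvalue_mem_union {N : ℕ} (hN : 0 < N) {A : Matrix (Fin N) (Fin N) ℂ}
    (hA : A.IsHermitian) {d : Fin N → ℝ} {g : ℝ} (hg : 0 ≤ g)
    (hd0 : ∀ i, 0 ≤ d i) (hdg : ∀ i, d i ≤ g)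
    {B : Matrix (Fin N) (Fin N) ℂ}
    (hBdef : B = A + Matrix.diagonal (fun i => (d i : ℂ)))
    (hB : B.IsHermitian) (k : Fin N) :
    ∃ j, hA.eigenvalues j ≤ hB.eigenvalues k ∧ hB.eigenvalues k ≤ hA.eigenvalues j + g := by
  by_contra hcon
  push_neg at hcon
  set μ : ℝ := hB.eigenvalues k with hμ
  -- all factors positive
  have hpos : ∀ j, 0 < (hA.eigenvalues j - μ) * (hA.eigenvalues j - μ + g) := by
    intro j
    rcases le_or_gt (hA.eigenvalues j) μ with h | h
    · have h2 := hcon j h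
      have ha : hA.eigenvalues j - μ + g < 0 := by linarith
      have hb' : hA.eigenvalues j - μ < 0 := by linarith
      exact mul_pos_of_neg_of_neg hb' ha
    · have ha : 0 < hA.eigenvalues j - μ := by linarith
      have hb' : 0 < hA.eigenvalues j - μ + g := by linarith
      exact mul_pos ha hb'
  set φ : EuclideanSpace ℂ (Fin N) := hB.eigenvectorBasis k with hφ
  have hφnorm : ‖φ‖ = 1 := hB.eigenvectorBasis.orthonormal.1 k
  -- eigenvector equation for B
  have hBφ : Matrix.toEuclideanLin B φ = (μ : ℂ) • φ := toEuclideanLin_eigen hB k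
  -- x = Aφ - μφ,  y = Aφ - (μ-g)φ
  set x : EuclideanSpace ℂ (Fin N) := Matrix.toEuclideanLin A φ - (μ : ℂ) • φ with hx
  set y : EuclideanSpace ℂ (Fin N) := Matrix.toEuclideanLin A φ - ((μ - g : ℝ) : ℂ) • φ with hy
  set b := hA.eigenvectorBasis with hb
  have hreprx : ∀ j, b.repr x j = ((hA.eigenvalues j - μ : ℝ) : ℂ) * b.repr φ j := by
    intro j
    rw [hx, map_sub, _root_.map_smul]
    simp only [PiLp.sub_apply, PiLp.smul_apply, repr_toEuclideanLin hA φ j]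
    rw [smul_eq_mul, repr_toEuclideanLin hA φ j]; push_cast; ring
  have hrepry : ∀ j, b.repr y j = ((hA.eigenvalues j - μ + g : ℝ) : ℂ) * b.repr φ j := by
    intro j
    rw [hy, map_sub, _root_.map_smul]
    simp only [PiLp.sub_apply, PiLp.smul_apply, repr_toEuclideanLin hA φ j]
    rw [smul_eq_mul, repr_toEuclideanLin hA φ j]; push_cast; ring
  -- LHS: inner x y has positive real part
  have hInner : (inner ℂ x y : ℂ)
      = ∑ j, (((hA.eigenvalues j - μ) * (hA.eigenvalues j - μ + g) : ℝ) : ℂ)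
          * (‖b.repr φ j‖ ^ 2 : ℝ) := by
    rw [inner_eq_sum b x y]
    refine Finset.sum_congr rfl fun j _ => ?_
    rw [hreprx j, hrepry j, _root_.map_mul]
    rw [Complex.conj_ofReal]
    have habs : ((starRingEnd ℂ) (b.repr φ j)) * (b.repr φ j)
        = ((‖b.repr φ j‖ ^ 2 : ℝ) : ℂ) := by
      rw [mul_comm, Complex.mul_conj, Complex.normSq_eq_norm_sq]
    rw [mul_mul_mul_comm, habs]
    push_cast
    ring
  -- real part of inner x y is positive
  have hsum1 : ∑ j, ‖b.repr φ j‖ ^ 2 = 1 := by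
    have := normsq_eq_sum b φ
    rw [hφnorm] at this
    simpa using this.symm
  obtain ⟨m, -, hm⟩ := Finset.exists_min_image Finset.univ
    (fun j => (hA.eigenvalues j - μ) * (hA.eigenvalues j - μ + g)) ⟨⟨0, hN⟩, Finset.mem_univ _⟩
  have hlower : (hA.eigenvalues m - μ) * (hA.eigenvalues m - μ + g)
      ≤ (inner ℂ x y : ℂ).re := by
    rw [hInner]
    rw [Complex.re_sum]
    have : ∀ j ∈ Finset.univ, ((((hA.eigenvalues j - μ) * (hA.eigenvalues j - μ + g) : ℝ) : ℂ)
          * ((‖b.repr φ j‖ ^ 2 : ℝ) : ℂ)).re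
        = (hA.eigenvalues j - μ) * (hA.eigenvalues j - μ + g) * ‖b.repr φ j‖ ^ 2 := by
      intro j _
      rw [← Complex.ofReal_mul, Complex.ofReal_re]
    rw [Finset.sum_congr rfl this]
    calc (hA.eigenvalues m - μ) * (hA.eigenvalues m - μ + g)
        = ∑ j, (hA.eigenvalues m - μ) * (hA.eigenvalues m - μ + g)
            * ‖b.repr φ j‖ ^ 2 := by rw [← Finset.mul_sum, hsum1, mul_one]
      _ ≤ _ := Finset.sum_le_sum fun j _ =>
          mul_le_mul_of_nonneg_right (hm j (Finset.mem_univ j)) (by positivity)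
  have hposre : 0 < (inner ℂ x y : ℂ).re := lt_of_lt_of_le (hpos m) hlower
  -- RHS: x = -Dφ, y = gφ - Dφ  =>  re inner x y ≤ 0
  have hAφ : Matrix.toEuclideanLin A φ = (μ : ℂ) • φ
      - Matrix.toEuclideanLin (Matrix.diagonal (fun i => (d i : ℂ))) φ := by
    have : Matrix.toEuclideanLin B φ = Matrix.toEuclideanLin A φ
        + Matrix.toEuclideanLin (Matrix.diagonal (fun i => (d i : ℂ))) φ := by
      rw [hBdef, map_add]; rfl
    rw [hBφ] at this
    exact eq_sub_of_add_eq this.symm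
  have hxcoord : ∀ i, x i = -((d i : ℂ) * φ i) := by
    intro i
    rw [hx, hAφ]
    simp only [PiLp.sub_apply, PiLp.smul_apply]
    have : Matrix.toEuclideanLin (Matrix.diagonal (fun i => (d i : ℂ))) φ i
        = (d i : ℂ) * φ i := by
      rw [Matrix.toEuclideanLin_apply]
      simp [Matrix.mulVec_diagonal]
    rw [this]
    ring
  have hycoord : ∀ i, y i = ((g : ℂ) - (d i : ℂ)) * φ i := by
    intro i
    rw [hy, hAφ]
    simp only [PiLp.sub_apply, PiLp.smul_apply]
    have : Matrix.toEuclideanLin (Matrix.diagonal (fun i => (d i : ℂ))) φ i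
        = (d i : ℂ) * φ i := by
      rw [Matrix.toEuclideanLin_apply]
      simp [Matrix.mulVec_diagonal]
    rw [this, smul_eq_mul, smul_eq_mul]
    push_cast
    ring
  have hupper : (inner ℂ x y : ℂ).re ≤ 0 := by
    have : (inner ℂ x y : ℂ) = ∑ i, (((- d i * (g - d i)) : ℝ) : ℂ)
        * ((‖φ i‖ ^ 2 : ℝ) : ℂ) := by
      rw [PiLp.inner_apply]
      refine Finset.sum_congr rfl fun i _ => ?_
      rw [RCLike.inner_apply', hxcoord i, hycoord i]
      rw [map_neg, _root_.map_mul, Complex.conj_ofReal]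
      have habs : ((starRingEnd ℂ) (φ i)) * (φ i)
          = ((‖φ i‖ ^ 2 : ℝ) : ℂ) := by
        rw [mul_comm, Complex.mul_conj, Complex.normSq_eq_norm_sq]
      calc -(↑(d i) * (starRingEnd ℂ) (φ i)) * ((↑g - ↑(d i)) * φ i)
          = (-(↑(d i) : ℂ) * ((g:ℂ) - ↑(d i))) * ((starRingEnd ℂ) (φ i) * φ i) := by ring
        _ = _ := by rw [habs]; push_cast; ring
    rw [this, Complex.re_sum]
    refine Finset.sum_nonpos fun i _ => ?_
    rw [← Complex.ofReal_mul, Complex.ofReal_re]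
    have h1 : -d i * (g - d i) ≤ 0 := by
      have := hd0 i; have := hdg i; nlinarith
    have h2 : (0:ℝ) ≤ ‖φ i‖ ^ 2 := by positivity
    nlinarith
  linarith

lemma mulVec_periodic (N : ℕ) (t : ℝ) (V : Fin N → ℝ) (d : Fin N → ℝ)
    (ψ : Fin N → ℂ) (i : Fin N) :
    (periodicH N t V + Matrix.diagonal (fun i => (d i : ℂ))).mulVec ψ i
      = (t:ℂ) * ψ (pSucc i) + (t:ℂ) * ψ (pPred i) + ((V i : ℂ) + (d i : ℂ)) * ψ i := by
  rw [Matrix.add_mulVec, Pi.add_apply, Matrix.mulVec_diagonal]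
  simp only [Matrix.mulVec, dotProduct, periodicH, Matrix.of_apply, add_mul,
    ite_mul, zero_mul, Finset.sum_add_distrib]
  rw [Finset.sum_ite_eq', Finset.sum_ite_eq', Finset.sum_ite_eq']
  simp only [Finset.mem_univ, if_true]
  ring

lemma nbr_diff (N : ℕ) (hN : 3 ≤ N) (ψ : Fin N → ℂ) (i : Fin N) :
    ψ (pSucc i) + ψ (pPred i) - dNbr ψ i
      = (if i = (⟨0, Nat.zero_lt_of_lt hN⟩ : Fin N)
          then ψ ⟨N-1, Nat.sub_lt (Nat.zero_lt_of_lt hN) Nat.one_pos⟩ else 0)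
        + (if i = (⟨N-1, Nat.sub_lt (Nat.zero_lt_of_lt hN) Nat.one_pos⟩ : Fin N)
          then ψ ⟨0, Nat.zero_lt_of_lt hN⟩ else 0) := by
  have hdnbr : dNbr ψ i = (if h : i.1 + 1 < N then ψ ⟨i.1 + 1, h⟩ else 0) +
      (if 0 < i.1 then ψ ⟨i.1 - 1, Nat.lt_of_le_of_lt (Nat.sub_le _ _) i.isLt⟩ else 0) := rfl
  by_cases hi0 : i = (⟨0, by omega⟩ : Fin N)
  · subst hi0
    have h1 : pSucc (⟨0, by omega⟩ : Fin N) = ⟨1, by omega⟩ :=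
      Fin.ext (by show (0+1) % N = 1; rw [Nat.mod_eq_of_lt (by omega)])
    have h2 : pPred (⟨0, by omega⟩ : Fin N) = ⟨N-1, by omega⟩ :=
      Fin.ext (by show (0+(N-1)) % N = N-1; rw [Nat.mod_eq_of_lt (by omega)]; omega)
    rw [h1, h2, hdnbr]
    rw [dif_pos (show 0+1 < N by omega), if_neg (by norm_num)]
    rw [if_pos rfl, if_neg (by simp only [Fin.ext_iff]; show ¬(0 = N-1); omega)]
    show ψ ⟨1, _⟩ + ψ ⟨N-1, _⟩ - (ψ ⟨0+1, _⟩ + 0) = ψ ⟨N-1, _⟩ + 0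
    ring
  · by_cases hi1 : i = (⟨N-1, by omega⟩ : Fin N)
    · subst hi1
      have h1 : pSucc (⟨N-1, by omega⟩ : Fin N) = ⟨0, by omega⟩ :=
        Fin.ext (by show ((N-1)+1) % N = 0; rw [show (N-1)+1 = N by omega, Nat.mod_self])
      have h2 : pPred (⟨N-1, by omega⟩ : Fin N) = ⟨N-2, by omega⟩ :=
        Fin.ext (by
          show ((N-1)+(N-1)) % N = N-2
          have h : (N - 1) + (N - 1) = (N - 2) + N := by omega
          rw [h, Nat.add_mod_right, Nat.mod_eq_of_lt (by omega)])
      rw [h1, h2, hdnbr]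
      rw [dif_neg (show ¬((N-1)+1 < N) by omega), if_pos (show 0 < N-1 by omega)]
      rw [if_neg (by simp only [Fin.ext_iff]; show ¬(N-1 = 0); omega), if_pos rfl]
      show ψ ⟨0, _⟩ + ψ ⟨N-2, _⟩ - (0 + ψ ⟨(N-1)-1, _⟩) = 0 + ψ ⟨0, _⟩
      have : ((N-1)-1 : ℕ) = N-2 := by omega
      simp only [this]
      ring
    · have hv0 : i.1 ≠ 0 := fun h => hi0 (Fin.ext h)
      have hv1 : i.1 ≠ N - 1 := fun h => hi1 (Fin.ext h)
      have hlt : i.1 + 1 < N := by have := i.isLt; omega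
      have h1 : pSucc i = ⟨i.1 + 1, hlt⟩ :=
        Fin.ext (by show (i.1+1) % N = i.1+1; exact Nat.mod_eq_of_lt hlt)
      have h2 : pPred i = ⟨i.1 - 1, by omega⟩ :=
        Fin.ext (by
          show (i.1+(N-1)) % N = i.1-1
          have h : i.1 + (N - 1) = (i.1 - 1) + N := by omega
          rw [h, Nat.add_mod_right, Nat.mod_eq_of_lt (by omega)])
      rw [h1, h2, hdnbr, dif_pos hlt, if_pos (by omega), if_neg hi0, if_neg hi1]
      ring

/-- finite-size content of Theorem 3: a normalized Dirichlet solution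
with eigenenergy `E` lies within distance `|t|·√(|ψ_1|² + |ψ_N|²)` of the complement
`⋃_n [E_n, E_n + g]` of the forbidden region. -/
theorem stmt_10 (N : ℕ) (hN : 3 ≤ N) (t : ℝ) (g : ℝ) (hg : 0 ≤ g) (V : Fin N → ℝ)
    (hH : (periodicH N t V).IsHermitian) (e : Fin N → ℝ)
    (he : IsSortedEigenvalues hH e)
    (ψ : Fin N → ℂ) (hnorm : Normalized ψ) (E : ℝ)
    (hsol : DirichletNLS N t g V ψ E) :
    Metric.infDist E (⋃ n : Fin N, Set.Icc (e n) (e n + g)) ≤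
      |t| * Real.sqrt (‖ψ ⟨0, by omega⟩‖ ^ 2 +
        ‖ψ ⟨N - 1, by omega⟩‖ ^ 2) := by

  classical
  have hN0 : 0 < N := by omega
  set d : Fin N → ℝ := fun i => g * ‖ψ i‖ ^ 2 with hd
  have hd0 : ∀ i, 0 ≤ d i := fun i => mul_nonneg hg (sq_nonneg _)
  have habs_le : ∀ i, ‖ψ i‖ ^ 2 ≤ 1 := by
    intro i
    calc ‖ψ i‖ ^ 2
        ≤ ∑ j, ‖ψ j‖ ^ 2 :=
          Finset.single_le_sum (f := fun j => ‖ψ j‖ ^ 2)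
            (fun j _ => by positivity) (Finset.mem_univ i)
      _ = 1 := hnorm
  have hdg : ∀ i, d i ≤ g := by
    intro i
    calc d i = g * ‖ψ i‖ ^ 2 := rfl
      _ ≤ g * 1 := mul_le_mul_of_nonneg_left (habs_le i) hg
      _ = g := mul_one g
  set D : Matrix (Fin N) (Fin N) ℂ := Matrix.diagonal (fun i => (d i : ℂ)) with hD
  set B : Matrix (Fin N) (Fin N) ℂ := periodicH N t V + D with hBdef
  have hDh : D.IsHermitian := by
    rw [hD]
    exact Matrix.isHermitian_diagonal_iff.2 fun i => Complex.conj_ofReal _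
  have hBh : B.IsHermitian := hH.add hDh
  set v : EuclideanSpace ℂ (Fin N) := (WithLp.equiv 2 (Fin N → ℂ)).symm ψ with hv
  have hvnorm : ‖v‖ = 1 := by
    rw [EuclideanSpace.norm_eq]
    have h1 : ∑ i, ‖v i‖ ^ 2 = 1 := by
      have h2 : ∀ i, ‖v i‖ = ‖ψ i‖ := fun i => rfl
      simp only [h2]
      exact hnorm
    rw [h1, Real.sqrt_one]
  -- residual computation
  have hsolB : ∀ i, B.mulVec ψ i - (E : ℂ) * ψ i
      = (t : ℂ) * ((if i = (⟨0, by omega⟩ : Fin N) then ψ ⟨N - 1, by omega⟩ else 0)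
        + (if i = (⟨N - 1, by omega⟩ : Fin N) then ψ ⟨0, by omega⟩ else 0)) := by
    intro i
    rw [hBdef, hD, mulVec_periodic N t V d ψ i]
    have hE : (E : ℂ) * ψ i = (t : ℂ) * dNbr ψ i + ((V i : ℂ) + (d i : ℂ)) * ψ i := by
      rw [← hsol i]
      have hdi : ((d i : ℝ) : ℂ) = (g : ℂ) * ((‖ψ i‖ : ℂ)) ^ 2 := by
        rw [hd]
        push_cast
        ring
      rw [hdi]
      ring
    rw [hE, ← nbr_diff N hN ψ i]
    ring
  set s : ℝ := ‖ψ (⟨0, by omega⟩ : Fin N)‖ ^ 2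
      + ‖ψ (⟨N - 1, by omega⟩ : Fin N)‖ ^ 2 with hs
  have hres : ‖Matrix.toEuclideanLin B v - (E : ℂ) • v‖ ^ 2 = t ^ 2 * s := by
    rw [EuclideanSpace.norm_eq, Real.sq_sqrt (by positivity)]
    have hcoord : ∀ i, (Matrix.toEuclideanLin B v - (E : ℂ) • v) i
        = B.mulVec ψ i - (E : ℂ) * ψ i := fun i => rfl
    have hterm : ∀ i, ‖(Matrix.toEuclideanLin B v - (E : ℂ) • v) i‖ ^ 2
        = (if i = (⟨0, by omega⟩ : Fin N) then
            t ^ 2 * ‖ψ (⟨N - 1, by omega⟩ : Fin N)‖ ^ 2 else 0)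
          + (if i = (⟨N - 1, by omega⟩ : Fin N) then
            t ^ 2 * ‖ψ (⟨0, by omega⟩ : Fin N)‖ ^ 2 else 0) := by
      intro i
      rw [hcoord i, hsolB i]
      have hne : (⟨0, by omega⟩ : Fin N) ≠ (⟨N - 1, by omega⟩ : Fin N) := by
        simp only [ne_eq, Fin.mk.injEq]
        omega
      by_cases h0 : i = (⟨0, by omega⟩ : Fin N)
      · rw [if_pos h0, if_neg (h0 ▸ hne), if_pos h0, if_neg (h0 ▸ hne)]
        rw [add_zero, norm_mul, mul_pow]
        have : ‖(t : ℂ)‖ ^ 2 = t ^ 2 := by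
          rw [Complex.norm_real, Real.norm_eq_abs, sq_abs]
        rw [this]
        ring
      · by_cases h1 : i = (⟨N - 1, by omega⟩ : Fin N)
        · rw [if_neg h0, if_pos h1, if_neg h0, if_pos h1]
          rw [zero_add, norm_mul, mul_pow]
          have : ‖(t : ℂ)‖ ^ 2 = t ^ 2 := by
            rw [Complex.norm_real, Real.norm_eq_abs, sq_abs]
          rw [this]
          ring
        · rw [if_neg h0, if_neg h1, if_neg h0, if_neg h1]
          simp
    rw [Finset.sum_congr rfl fun i _ => hterm i, Finset.sum_add_distrib,
      Finset.sum_ite_eq', Finset.sum_ite_eq']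
    simp only [Finset.mem_univ, if_true]
    rw [hs]
    ring
  -- closest eigenvalue of B
  obtain ⟨k, hk⟩ := exists_eigenvalue_close hBh hN0 v hvnorm E
  have hk2 : (hBh.eigenvalues k - E) ^ 2 ≤ t ^ 2 * s := hk.trans_eq hres
  have hkabs : |hBh.eigenvalues k - E| ≤ |t| * Real.sqrt s := by
    calc |hBh.eigenvalues k - E|
        = Real.sqrt ((hBh.eigenvalues k - E) ^ 2) := (Real.sqrt_sq_eq_abs _).symm
      _ ≤ Real.sqrt (t ^ 2 * s) := Real.sqrt_le_sqrt hk2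
      _ = |t| * Real.sqrt s := by
          rw [Real.sqrt_mul (sq_nonneg t), Real.sqrt_sq_eq_abs]
  -- the eigenvalue lies in the union of intervals
  obtain ⟨j, hj1, hj2⟩ := eigenvalue_mem_union hN0 hH hg hd0 hdg hBdef hBh k
  obtain ⟨hmono, σ, hσ⟩ := he
  have hen : e (σ.symm j) = hH.eigenvalues j := by
    rw [hσ, Equiv.apply_symm_apply]
  have hmem : hBh.eigenvalues k ∈ ⋃ n : Fin N, Set.Icc (e n) (e n + g) := by
    refine Set.mem_iUnion.2 ⟨σ.symm j, ?_⟩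
    rw [Set.mem_Icc, hen]
    exact ⟨hj1, hj2⟩
  calc Metric.infDist E (⋃ n : Fin N, Set.Icc (e n) (e n + g))
      ≤ dist E (hBh.eigenvalues k) := Metric.infDist_le_dist_of_mem hmem
    _ = |hBh.eigenvalues k - E| := by rw [Real.dist_eq, abs_sub_comm]
    _ ≤ |t| * Real.sqrt s := hkabs
    _ = _ := by rw [hs]
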